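/- arXiv:1110.4425 — 6 statements merged into one kernel-verified Lean document; each statement's English description precedes it below -/
import Mathlib

section
/- Let a_0, …, a_n be complex numbers with a_0 ≠ 0, and let R be a nonzero complex polynomial with deg R ≤ n. Then there exists a complex polynomial Q with deg Q = deg R such that a_0 Q + a_1 Q' + ⋯ + a_n Q^{(n)} = R (as polynomials). -/
open Polynomial Finset

lemma iter_deriv_sub (p q : Polynomial ℂ) (j : ℕ) :
    derivative^[j] (p - q) = derivative^[j] p - derivative^[j] q := by
  induction j with
  | zero => simp
  | succ k ih => simp [Function.iterate_succ_apply', ih]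

lemma iter_deriv_deg_le (p : Polynomial ℂ) (j : ℕ) :
    (derivative^[j] p).degree ≤ p.degree := by
  induction j with
  | zero => simp
  | succ k ih =>
    rw [Function.iterate_succ_apply']
    exact le_trans degree_derivative_le ih

lemma iter_deriv_deg_lt (p : Polynomial ℂ) (hp : p ≠ 0) (j : ℕ) (hj : 1 ≤ j) :
    (derivative^[j] p).degree < p.degree := by
  obtain ⟨k, rfl⟩ := Nat.exists_eq_add_of_le hj
  rw [add_comm, Function.iterate_succ_apply]
  exact lt_of_le_of_lt (iter_deriv_deg_le _ _) (degree_derivative_lt hp)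

theorem stmt_2 (n : ℕ) (a : ℕ → ℂ) (ha : a 0 ≠ 0) (R : Polynomial ℂ) (hR : R ≠ 0)
    (hdeg : R.degree ≤ (n : ℕ)) :
    ∃ Q : Polynomial ℂ, Q.degree = R.degree ∧
      ∑ j ∈ range (n + 1), C (a j) * Polynomial.derivative^[j] Q = R := by
  suffices H : ∀ m : ℕ, ∀ R : Polynomial ℂ, R ≠ 0 → R.degree ≤ (n : ℕ) → R.natDegree ≤ m →
      ∃ Q : Polynomial ℂ, Q.degree = R.degree ∧
        ∑ j ∈ range (n + 1), C (a j) * Polynomial.derivative^[j] Q = R from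
    H R.natDegree R hR hdeg le_rfl
  intro m
  induction m using Nat.strong_induction_on with
  | _ m ih =>
    intro R hR hdeg hnat
    set P : Polynomial ℂ := C (a 0)⁻¹ * R with hPdef
    have hC0 : (C (a 0)⁻¹ : Polynomial ℂ) ≠ 0 := by
      simpa using inv_ne_zero ha
    have hP0 : P ≠ 0 := mul_ne_zero hC0 hR
    have hPdeg : P.degree = R.degree := by
      rw [hPdef, degree_mul, degree_C (inv_ne_zero ha), zero_add]
    have hfirst : C (a 0) * P = R := by
      rw [hPdef, ← mul_assoc, ← C_mul, mul_inv_cancel₀ ha, C_1, one_mul]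
    have hsplit : ∑ j ∈ range (n + 1), C (a j) * derivative^[j] P =
        (∑ i ∈ range n, C (a (i + 1)) * derivative^[i + 1] P) + R := by
      rw [Finset.sum_range_succ']
      simp [hfirst]
    set S : Polynomial ℂ := ∑ i ∈ range n, C (a (i + 1)) * derivative^[i + 1] P with hSdef
    have hSlt : S.degree < R.degree := by
      refine lt_of_le_of_lt (degree_sum_le _ _) ?_
      rw [Finset.sup_lt_iff (by rwa [bot_lt_iff_ne_bot, ne_eq, degree_eq_bot])]
      intro i _
      refine lt_of_le_of_lt ((degree_mul_le _ _).trans (le_trans (add_le_add_left degree_C_le _) (by rw [zero_add]))) ?_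
      rw [← hPdeg]
      exact iter_deriv_deg_lt P hP0 (i + 1) (Nat.succ_le_succ (Nat.zero_le i))
    by_cases hS : S = 0
    · refine ⟨P, hPdeg, ?_⟩
      rw [hsplit, hS, zero_add]
    · have hSnat : S.natDegree < R.natDegree := natDegree_lt_natDegree hS hSlt
      obtain ⟨Q', hQ'deg, hQ'sum⟩ := ih S.natDegree (lt_of_lt_of_le hSnat hnat) S hS
        (le_trans hSlt.le hdeg) le_rfl
      have hQ'lt : Q'.degree < P.degree := by rw [hQ'deg, hPdeg]; exact hSlt
      refine ⟨P - Q', ?_, ?_⟩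
      · rw [degree_sub_eq_left_of_degree_lt hQ'lt, hPdeg]
      · have : ∑ j ∈ range (n + 1), C (a j) * derivative^[j] (P - Q') =
            (∑ j ∈ range (n + 1), C (a j) * derivative^[j] P) -
              ∑ j ∈ range (n + 1), C (a j) * derivative^[j] Q' := by
          rw [← Finset.sum_sub_distrib]
          refine Finset.sum_congr rfl fun j _ => ?_
          rw [iter_deriv_sub, mul_sub]
        rw [this, hsplit, hQ'sum, add_sub_cancel_left]
end

section
/- Let a_0, …, a_n be real numbers with a_0 ≠ 0, and let R be a nonzero real polynomial. Then there exists a real polynomial Q with deg Q = deg R such that a_0 Q + a_1 Q' + ⋯ + a_n Q^{(n)} = R. -/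
open Polynomial Finset

private lemma degree_iter_deriv_le (p : Polynomial ℝ) (j : ℕ) :
    (Polynomial.derivative^[j] p).degree ≤ p.degree := by
  induction j with
  | zero => simp
  | succ k ih =>
    rw [Function.iterate_succ_apply']
    exact (Polynomial.degree_derivative_le).trans ih

theorem stmt_3 (n : ℕ) (a : ℕ → ℝ) (ha : a 0 ≠ 0) (R : Polynomial ℝ) (hR : R ≠ 0) :
    ∃ Q : Polynomial ℝ, Q.degree = R.degree ∧
      ∑ j ∈ range (n + 1), C (a j) * Polynomial.derivative^[j] Q = R := by
  suffices h : ∀ m : ℕ, ∀ R : Polynomial ℝ, R ≠ 0 → R.natDegree ≤ m →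
      ∃ Q : Polynomial ℝ, Q.degree = R.degree ∧
        ∑ j ∈ range (n + 1), C (a j) * Polynomial.derivative^[j] Q = R from
    h R.natDegree R hR le_rfl
  intro m
  induction m using Nat.strong_induction_on with
  | _ m ih =>
    intro R hR hdeg
    set Q₀ : Polynomial ℝ := C (a 0)⁻¹ * R with hQ₀
    have hQ₀ne : Q₀ ≠ 0 := by
      simp [hQ₀, mul_eq_zero, hR, inv_eq_zero, ha]
    have hdQ₀ : Q₀.degree = R.degree := by
      rw [hQ₀, degree_mul, degree_C (inv_ne_zero ha), zero_add]
    have hSQ₀ : ∑ j ∈ range (n + 1), C (a j) * Polynomial.derivative^[j] Q₀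
        = R + ∑ j ∈ range n, C (a (j + 1)) * Polynomial.derivative^[j + 1] Q₀ := by
      rw [Finset.sum_range_succ']
      have : C (a 0) * Polynomial.derivative^[0] Q₀ = R := by
        simp only [Function.iterate_zero_apply, hQ₀, ← mul_assoc, ← C_mul,
          mul_inv_cancel₀ ha, C_1, one_mul]
      rw [this, add_comm]
    set E : Polynomial ℝ := ∑ j ∈ range n, C (a (j + 1)) * Polynomial.derivative^[j + 1] Q₀
      with hE
    have hEdeg : E.degree < R.degree := by
      apply lt_of_le_of_lt (Polynomial.degree_sum_le _ _)
      rw [Finset.sup_lt_iff (by rwa [bot_lt_iff_ne_bot, Ne, Polynomial.degree_eq_bot])]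
      intro j _
      apply lt_of_le_of_lt (Polynomial.degree_mul_le _ _)
      apply lt_of_le_of_lt (add_le_add (Polynomial.degree_C_le) le_rfl)
      rw [zero_add]
      calc (Polynomial.derivative^[j + 1] Q₀).degree
          ≤ (Polynomial.derivative Q₀).degree := by
            rw [Function.iterate_succ_apply]
            exact degree_iter_deriv_le _ _
        _ < Q₀.degree := Polynomial.degree_derivative_lt hQ₀ne
        _ = R.degree := hdQ₀
    by_cases hE0 : E = 0
    · refine ⟨Q₀, hdQ₀, ?_⟩
      rw [hSQ₀, hE0, add_zero]
    · have hElt : E.natDegree < R.natDegree := natDegree_lt_natDegree hE0 hEdeg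
      obtain ⟨Q', hQ'deg, hQ'⟩ := ih E.natDegree (lt_of_lt_of_le hElt hdeg) E hE0 le_rfl
      refine ⟨Q₀ - Q', ?_, ?_⟩
      · rw [Polynomial.degree_sub_eq_left_of_degree_lt, hdQ₀]
        rw [hQ'deg, hdQ₀]; exact hEdeg
      · have : ∀ j, Polynomial.derivative^[j] (Q₀ - Q')
            = Polynomial.derivative^[j] Q₀ - Polynomial.derivative^[j] Q' := fun j =>
          Polynomial.iterate_derivative_sub
        simp_rw [this, mul_sub, Finset.sum_sub_distrib, hQ', hSQ₀]
        ring
end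

section
/- Let a_0, …, a_n be complex numbers, suppose there is an index k < n with a_0 = a_1 = ⋯ = a_k = 0 and a_{k+1} ≠ 0, and let R be a nonzero complex polynomial. Then there exists a complex polynomial Q_1 with deg Q_1 = deg R such that Q(t) = t^{k+1} Q_1(t) satisfies a_{k+1} Q^{(k+1)} + ⋯ + a_n Q^{(n)} = R. -/
open Polynomial Finset

noncomputable def Tmap (n k : ℕ) (a : ℕ → ℂ) (Q : Polynomial ℂ) : Polynomial ℂ :=
  ∑ j ∈ range (n + 1), C (a j) * Polynomial.derivative^[j] (X ^ (k + 1) * Q)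

lemma Tmap_add (n k : ℕ) (a : ℕ → ℂ) (p q : Polynomial ℂ) :
    Tmap n k a (p + q) = Tmap n k a p + Tmap n k a q := by
  simp [Tmap, mul_add, iterate_map_add, Finset.sum_add_distrib]

lemma Tmap_coeff (n k : ℕ) (hkn : k < n) (a : ℕ → ℂ) (hzero : ∀ j ≤ k, a j = 0)
    (Q : Polynomial ℂ) (i : ℕ) (hi : Q.natDegree ≤ i) :
    (Tmap n k a Q).coeff i = a (k + 1) * ((i + (k + 1)).descFactorial (k + 1) : ℂ) * Q.coeff i := by
  rw [Tmap, finset_sum_coeff, Finset.sum_eq_single (k + 1)]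
  · rw [coeff_C_mul, coeff_iterate_derivative, mul_comm (X ^ (k + 1)) Q,
      coeff_mul_X_pow, nsmul_eq_mul, ← mul_assoc]
  · intro j hj hjne
    rw [coeff_C_mul, coeff_iterate_derivative, mul_comm (X ^ (k + 1)) Q, coeff_mul_X_pow']
    rcases le_or_gt j k with h | h
    · rw [hzero j h, zero_mul]
    · have hj2 : k + 2 ≤ j := by omega
      rw [if_pos (by omega)]
      rw [coeff_eq_zero_of_natDegree_lt (by omega)]
      simp
  · intro h
    exact absurd (Finset.mem_range.mpr (by omega)) h

lemma Tmap_degree (n k : ℕ) (hkn : k < n) (a : ℕ → ℂ) (hzero : ∀ j ≤ k, a j = 0)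
    (hk1 : a (k + 1) ≠ 0) (Q : Polynomial ℂ) (hQ : Q ≠ 0) :
    (Tmap n k a Q).degree = Q.degree := by
  have hd : ∀ i, Q.natDegree < i → (Tmap n k a Q).coeff i = 0 := by
    intro i hi
    rw [Tmap_coeff n k hkn a hzero Q i hi.le, coeff_eq_zero_of_natDegree_lt hi, mul_zero]
  have hne : (Tmap n k a Q).coeff Q.natDegree ≠ 0 := by
    rw [Tmap_coeff n k hkn a hzero Q _ le_rfl]
    refine mul_ne_zero (mul_ne_zero hk1 ?_) (by rwa [← leadingCoeff, leadingCoeff_ne_zero])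
    exact Nat.cast_ne_zero.mpr (by rw [Ne, Nat.descFactorial_eq_zero_iff_lt]; omega)
  have h1 : (Tmap n k a Q).degree ≤ (Q.natDegree : WithBot ℕ) :=
    (degree_le_iff_coeff_zero _ _).mpr fun m hm => hd m (by exact_mod_cast hm)
  have h2 : (Q.natDegree : WithBot ℕ) ≤ (Tmap n k a Q).degree := le_degree_of_ne_zero hne
  rw [degree_eq_natDegree hQ]
  exact le_antisymm h1 h2

lemma Tmap_surj (n k : ℕ) (hkn : k < n) (a : ℕ → ℂ) (hzero : ∀ j ≤ k, a j = 0)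
    (hk1 : a (k + 1) ≠ 0) :
    ∀ m : ℕ, ∀ R : Polynomial ℂ, R ≠ 0 → R.natDegree = m →
      ∃ Q₁ : Polynomial ℂ, Q₁.degree = R.degree ∧ Tmap n k a Q₁ = R := by
  intro m
  induction m using Nat.strong_induction_on with
  | _ m ih =>
    intro R hR hRm
    set d : ℂ := ((m + (k + 1)).descFactorial (k + 1) : ℂ) with hdd
    have hd0 : d ≠ 0 := Nat.cast_ne_zero.mpr (by rw [Ne, Nat.descFactorial_eq_zero_iff_lt]; omega)
    set c : ℂ := R.leadingCoeff / (a (k + 1) * d) with hc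
    have hc0 : c ≠ 0 := div_ne_zero (leadingCoeff_ne_zero.mpr hR) (mul_ne_zero hk1 hd0)
    set P : Polynomial ℂ := C c * X ^ m with hP
    have hP0 : P ≠ 0 := by
      simp [hP, hc0]
    have hPdeg : P.natDegree = m := by
      rw [hP, natDegree_C_mul_X_pow _ _ hc0]
    have hPdeg' : P.degree = (m : WithBot ℕ) := by
      rw [degree_eq_natDegree hP0, hPdeg]
    have hTP : (Tmap n k a P).degree = R.degree := by
      rw [Tmap_degree n k hkn a hzero hk1 P hP0, hPdeg', degree_eq_natDegree hR, hRm]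
    have hTPlc : (Tmap n k a P).leadingCoeff = R.leadingCoeff := by
      have hnd : (Tmap n k a P).natDegree = m := by
        have := hTP
        rw [degree_eq_natDegree hR, hRm] at this
        exact natDegree_eq_of_degree_eq_some this
      rw [leadingCoeff, hnd, Tmap_coeff n k hkn a hzero P m hPdeg.le]
      have : P.coeff m = c := by simp [hP]
      rw [this, hc, ← hdd]
      field_simp
    rcases eq_or_ne (R - Tmap n k a P) 0 with h0 | h0
    · exact ⟨P, by rw [hPdeg', degree_eq_natDegree hR, hRm], by
        have := sub_eq_zero.mp h0; exact this.symm⟩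
    · have hdeg' : (R - Tmap n k a P).degree < R.degree := by
        refine degree_sub_lt ?_ hR hTPlc.symm
        exact hTP.symm
      have hlt : (R - Tmap n k a P).natDegree < m := by
        have := hdeg'
        rw [degree_eq_natDegree hR, hRm, degree_eq_natDegree h0] at this
        exact_mod_cast this
      obtain ⟨Q', hQ'deg, hQ'⟩ := ih _ hlt (R - Tmap n k a P) h0 rfl
      refine ⟨P + Q', ?_, ?_⟩
      · have hQ'lt : Q'.degree < P.degree := by
          rw [hQ'deg, hPdeg', degree_eq_natDegree h0]
          exact_mod_cast hlt
        rw [degree_add_eq_left_of_degree_lt hQ'lt, hPdeg', degree_eq_natDegree hR, hRm]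
      · rw [Tmap_add, hQ']
        ring

theorem stmt_4 (n k : ℕ) (hkn : k < n) (a : ℕ → ℂ)
    (hzero : ∀ j ≤ k, a j = 0) (hk1 : a (k + 1) ≠ 0)
    (R : Polynomial ℂ) (hR : R ≠ 0) :
    ∃ Q₁ : Polynomial ℂ, Q₁.degree = R.degree ∧
      ∑ j ∈ range (n + 1), C (a j) * Polynomial.derivative^[j] (X ^ (k + 1) * Q₁) = R := by
  obtain ⟨Q₁, h1, h2⟩ := Tmap_surj n k hkn a hzero hk1 R.natDegree R hR rfl
  exact ⟨Q₁, h1, h2⟩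
end

section
/- Let p be the characteristic polynomial of the operator P(d/dt) = a_n (d/dt)^n + ⋯ + a_0 I with real coefficients, let γ ∈ ℂ with p(γ) ≠ 0, and let R be a nonzero real polynomial. Then there exists a complex polynomial Q with deg Q = deg R such that x(t) = Q(t) e^{γt} satisfies a_n x^{(n)}(t) + ⋯ + a_1 x'(t) + a_0 x(t) = R(t) e^{γt} for all t ∈ ℝ. -/
open Polynomial Finset

noncomputable def Dop (γ : ℂ) : Module.End ℂ (Polynomial ℂ) :=
  Polynomial.derivative + γ • 1

lemma Dop_apply (γ : ℂ) (Q : Polynomial ℂ) :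
    Dop γ Q = derivative Q + γ • Q := by
  simp [Dop]

lemma degA (γ : ℂ) (j : ℕ) (Q : Polynomial ℂ) (hQ : Q ≠ 0) :
    ((Dop γ ^ j) Q - γ ^ j • Q).degree < Q.degree := by
  have hbot : (⊥ : WithBot ℕ) < Q.degree := by
    simpa [bot_lt_iff_ne_bot, Ne, degree_eq_bot] using hQ
  induction j with
  | zero => simpa using hbot
  | succ j ih =>
    have key : (Dop γ ^ (j+1)) Q - γ ^ (j+1) • Q
        = Dop γ ((Dop γ ^ j) Q - γ ^ j • Q) + γ ^ j • derivative Q := by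
      rw [pow_succ', Module.End.mul_apply]
      simp only [Dop_apply, map_add, map_sub, map_smul, pow_succ]
      module
    rw [key]
    refine (degree_add_le _ _).trans_lt (max_lt ?_ ?_)
    · rw [Dop_apply]
      refine (degree_add_le _ _).trans_lt (max_lt ?_ ?_)
      · exact (degree_derivative_le).trans_lt ih
      · exact (degree_smul_le _ _).trans_lt ih
    · exact (degree_smul_le _ _).trans_lt (degree_derivative_lt hQ)

noncomputable def Pop (n : ℕ) (a : ℕ → ℝ) (γ : ℂ) : Module.End ℂ (Polynomial ℂ) :=
  ∑ j ∈ range (n + 1), (a j : ℂ) • (Dop γ ^ j)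

lemma degB (n : ℕ) (a : ℕ → ℝ) (γ : ℂ) (Q : Polynomial ℂ) (hQ : Q ≠ 0) :
    (Pop n a γ Q - (∑ j ∈ range (n + 1), (a j : ℂ) * γ ^ j) • Q).degree < Q.degree := by
  have hbot : (⊥ : WithBot ℕ) < Q.degree := by
    simpa [bot_lt_iff_ne_bot, Ne, degree_eq_bot] using hQ
  have h1 : Pop n a γ Q - (∑ j ∈ range (n + 1), (a j : ℂ) * γ ^ j) • Q
      = ∑ j ∈ range (n + 1), (a j : ℂ) • ((Dop γ ^ j) Q - γ ^ j • Q) := by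
    simp only [Pop, LinearMap.sum_apply, LinearMap.smul_apply, smul_sub,
      Finset.sum_sub_distrib, Finset.sum_smul, mul_smul]
  rw [h1]
  refine (degree_sum_le _ _).trans_lt ((Finset.sup_lt_iff hbot).2 ?_)
  intro j _
  exact (degree_smul_le _ _).trans_lt (degA γ j Q hQ)

lemma solve (n : ℕ) (a : ℕ → ℝ) (γ : ℂ)
    (hc : (∑ j ∈ range (n + 1), (a j : ℂ) * γ ^ j) ≠ 0) :
    ∀ S : Polynomial ℂ, ∃ Q, Pop n a γ Q = S ∧ Q.degree = S.degree := by
  set c := ∑ j ∈ range (n + 1), (a j : ℂ) * γ ^ j with hcdef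
  suffices H : ∀ d, ∀ S : Polynomial ℂ, S.natDegree < d →
      ∃ Q, Pop n a γ Q = S ∧ Q.degree = S.degree by
    exact fun S => H (S.natDegree + 1) S (Nat.lt_succ_self _)
  intro d
  induction d with
  | zero => exact fun S h => absurd h (Nat.not_lt_zero _)
  | succ d ih =>
    intro S hS
    rcases eq_or_ne S 0 with rfl | hS0
    · exact ⟨0, by simp, by simp⟩
    have hQ0 : c⁻¹ • S ≠ 0 := by
      simp [smul_ne_zero_iff, inv_ne_zero hc, hS0]
    have hdQ0 : (c⁻¹ • S).degree = S.degree := by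
      rw [smul_eq_C_mul, degree_C_mul (inv_ne_zero hc)]
    set err := Pop n a γ (c⁻¹ • S) - S with herrdef
    have herr : err.degree < S.degree := by
      have := degB n a γ (c⁻¹ • S) hQ0
      rw [hdQ0] at this
      have he : c • c⁻¹ • S = S := by
        rw [smul_smul, mul_inv_cancel₀ hc, one_smul]
      rw [← hcdef, he] at this
      exact this
    rcases eq_or_ne err 0 with herr0 | herr0
    · refine ⟨c⁻¹ • S, ?_, hdQ0⟩
      have := herrdef.symm.trans herr0
      linear_combination (norm := module) this
    · have hnd : err.natDegree < S.natDegree := natDegree_lt_natDegree herr0 herr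
      obtain ⟨Q₁, hQ₁, hdQ₁⟩ := ih err (lt_of_lt_of_le hnd (Nat.lt_succ_iff.mp hS))
      refine ⟨c⁻¹ • S - Q₁, ?_, ?_⟩
      · rw [map_sub, hQ₁, herrdef]
        ring
      · rw [degree_sub_eq_left_of_degree_lt, hdQ0]
        rw [hdQ0, hdQ₁]
        exact herr

lemma hasDeriv_aux (γ : ℂ) (Q : Polynomial ℂ) (t : ℝ) :
    HasDerivAt (fun s : ℝ => Q.eval (s : ℂ) * Complex.exp (γ * s))
      ((Dop γ Q).eval (t : ℂ) * Complex.exp (γ * t)) t := by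
  have h1 : HasDerivAt (fun z : ℂ => Q.eval z * Complex.exp (γ * z))
      (Q.derivative.eval (t : ℂ) * Complex.exp (γ * t)
        + Q.eval (t : ℂ) * (Complex.exp (γ * t) * γ)) (t : ℂ) := by
    have he : HasDerivAt (fun z : ℂ => Complex.exp (γ * z))
        (Complex.exp (γ * t) * γ) ((t : ℝ) : ℂ) := by
      simpa using ((hasDerivAt_id ((t : ℝ) : ℂ)).const_mul γ).cexp
    exact (Q.hasDerivAt _).mul he
  have h2 := h1.comp_ofReal
  convert h2 using 1
  rw [Dop_apply]
  simp [eval_add, eval_smul]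
  ring

lemma iterated_aux (γ : ℂ) (Q : Polynomial ℂ) (j : ℕ) (t : ℝ) :
    iteratedDeriv j (fun s : ℝ => Q.eval (s : ℂ) * Complex.exp (γ * s)) t
      = ((Dop γ ^ j) Q).eval (t : ℂ) * Complex.exp (γ * t) := by
  induction j generalizing t with
  | zero => simp
  | succ j ih =>
    rw [iteratedDeriv_succ]
    have hfun : iteratedDeriv j (fun s : ℝ => Q.eval (s : ℂ) * Complex.exp (γ * s))
        = fun s : ℝ => ((Dop γ ^ j) Q).eval (s : ℂ) * Complex.exp (γ * s) :=
      funext fun s => ih s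
    rw [hfun, (hasDeriv_aux γ ((Dop γ ^ j) Q) t).deriv, pow_succ', Module.End.mul_apply]

theorem stmt_5 (n : ℕ) (a : ℕ → ℝ) (p : Polynomial ℝ)
    (hp : p = ∑ j ∈ range (n + 1), C (a j) * X ^ j)
    (γ : ℂ) (hγ : Polynomial.aeval γ p ≠ 0)
    (R : Polynomial ℝ) (hR : R ≠ 0) :
    ∃ Q : Polynomial ℂ, Q.degree = R.degree ∧
      ∀ t : ℝ,
        ∑ j ∈ range (n + 1),
            (a j : ℂ) *
              iteratedDeriv j (fun s : ℝ => Q.eval (s : ℂ) * Complex.exp (γ * s)) t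
          = ((R.eval t : ℝ) : ℂ) * Complex.exp (γ * t) := by
  have hc : (∑ j ∈ range (n + 1), (a j : ℂ) * γ ^ j) ≠ 0 := by
    subst hp
    simpa [map_sum, aeval_C, aeval_X_pow, Algebra.algebraMap_self_apply] using hγ
  obtain ⟨Q, hTQ, hdeg⟩ := solve n a γ hc (R.map (algebraMap ℝ ℂ))
  refine ⟨Q, ?_, ?_⟩
  · rw [hdeg, degree_map]
  · intro t
    have hsum : ∑ j ∈ range (n + 1),
        (a j : ℂ) * iteratedDeriv j (fun s : ℝ => Q.eval (s : ℂ) * Complex.exp (γ * s)) t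
        = (Pop n a γ Q).eval (t : ℂ) * Complex.exp (γ * t) := by
      simp only [iterated_aux, Pop, LinearMap.sum_apply, LinearMap.smul_apply,
        eval_finset_sum, Finset.sum_mul, eval_smul, smul_eq_mul, mul_assoc]
    rw [hsum, hTQ]
    congr 1
    rw [eval_map, ← aeval_def]
    show (aeval (algebraMap ℝ ℂ t)) R = _
    rw [aeval_algebraMap_apply]
    rw [coe_aeval_eq_eval]
    rfl
end

section
/- Let a_0, …, a_n be complex numbers, not all of a_1, …, a_n zero, and let R be a nonzero complex polynomial of degree at most n. Then there exists a complex polynomial Q such that a_0 Q + a_1 Q' + ⋯ + a_n Q^{(n)} = R. -/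
open Polynomial Finset

private lemma iter_deriv_add (j : ℕ) (P Q : Polynomial ℂ) :
    derivative^[j] (P + Q) = derivative^[j] P + derivative^[j] Q := by
  induction j generalizing P Q with
  | zero => simp
  | succ j ih => simp [Function.iterate_succ_apply, derivative_add, ih]

private lemma aux18 (n k : ℕ) (a : ℕ → ℂ) (hk : k ≤ n) (hak : a k ≠ 0)
    (hmin : ∀ j, j < k → a j = 0) :
    ∀ m : ℕ, ∀ R : Polynomial ℂ, R.degree < (m : ℕ) →
      ∃ Q : Polynomial ℂ, ∑ j ∈ range (n + 1), C (a j) * derivative^[j] Q = R := by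
  intro m
  induction m with
  | zero =>
    intro R hR
    refine ⟨0, ?_⟩
    have hRb : R = 0 := by
      rw [← degree_eq_bot]
      exact Nat.WithBot.lt_zero_iff.mp (by exact_mod_cast hR)
    simp [hRb]
  | succ m ih =>
    intro R hR
    by_cases hR0 : R = 0
    · exact ⟨0, by simp [hR0]⟩
    set d := R.natDegree with hd
    have hdesc : ((d + k).descFactorial k : ℂ) ≠ 0 := by
      have : (d + k).descFactorial k ≠ 0 := by
        rw [Ne, Nat.descFactorial_eq_zero_iff_lt]; omega
      exact_mod_cast this
    set c : ℂ := R.leadingCoeff / (a k * ((d + k).descFactorial k : ℂ)) with hc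
    set Q0 : Polynomial ℂ := C c * X ^ (d + k) with hQ0
    have hterm : ∀ j, C (a j) * derivative^[j] Q0
        = C (a j * c * ((d + k).descFactorial j : ℂ)) * X ^ (d + k - j) := by
      intro j
      rw [hQ0, iterate_derivative_C_mul, iterate_derivative_X_pow_eq_C_mul,
        map_mul, map_mul]
      ring
    have hkmem : k ∈ range (n + 1) := mem_range.mpr (Nat.lt_succ_of_le hk)
    set E : Polynomial ℂ := ∑ j ∈ (range (n + 1)).erase k,
        C (a j * c * ((d + k).descFactorial j : ℂ)) * X ^ (d + k - j) with hE
    have htk : C (a k) * derivative^[k] Q0 = C R.leadingCoeff * X ^ d := by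
      rw [hterm k, (by omega : d + k - k = d)]
      congr 1
      rw [hc]
      field_simp
    have hsum : ∑ j ∈ range (n + 1), C (a j) * derivative^[j] Q0
        = C R.leadingCoeff * X ^ d + E := by
      rw [← Finset.add_sum_erase _ _ hkmem, htk, hE]
      congr 1
      exact Finset.sum_congr rfl fun j _ => hterm j
    have hEdeg : E.degree < (d : WithBot ℕ) := by
      rw [hE]
      apply lt_of_le_of_lt (degree_sum_le _ _)
      rw [Finset.sup_lt_iff (by exact_mod_cast WithBot.bot_lt_coe d)]
      intro j hj
      rcases lt_or_gt_of_ne (Finset.ne_of_mem_erase hj) with h | h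
      · simp [hmin j h]
      · by_cases hjd : j ≤ d + k
        · refine lt_of_le_of_lt (degree_C_mul_X_pow_le _ _) ?_
          exact_mod_cast (by omega : d + k - j < d)
        · have h0 : (d + k).descFactorial j = 0 :=
            Nat.descFactorial_eq_zero_iff_lt.mpr (by omega)
          simp [h0]
    have hlc : R.leadingCoeff ≠ 0 := leadingCoeff_ne_zero.mpr hR0
    have hRL : (R - C R.leadingCoeff * X ^ d).degree < (d : WithBot ℕ) := by
      have h1 : R.degree = (C R.leadingCoeff * X ^ d).degree := by
        rw [degree_C_mul_X_pow _ hlc, degree_eq_natDegree hR0]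
      have h2 : R.leadingCoeff = (C R.leadingCoeff * X ^ d).leadingCoeff := by
        rw [leadingCoeff_C_mul_X_pow]
      have := degree_sub_lt h1 hR0 h2
      rwa [degree_eq_natDegree hR0] at this
    have hkey : (R - ∑ j ∈ range (n + 1), C (a j) * derivative^[j] Q0).degree < (d : WithBot ℕ) := by
      rw [hsum]
      have heq : R - (C R.leadingCoeff * X ^ d + E)
          = (R - C R.leadingCoeff * X ^ d) - E := by ring
      rw [heq]
      exact lt_of_le_of_lt (degree_sub_le _ _) (max_lt hRL hEdeg)
    have hdm : d ≤ m := by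
      have : (d : WithBot ℕ) < ((m + 1 : ℕ) : WithBot ℕ) := by
        rw [← degree_eq_natDegree hR0]; exact hR
      exact_mod_cast Nat.lt_succ_iff.mp (by exact_mod_cast this)
    obtain ⟨Q1, hQ1⟩ := ih _ (lt_of_lt_of_le hkey (by exact_mod_cast hdm))
    refine ⟨Q0 + Q1, ?_⟩
    have hsplit : ∑ j ∈ range (n + 1), C (a j) * derivative^[j] (Q0 + Q1)
        = (∑ j ∈ range (n + 1), C (a j) * derivative^[j] Q0)
          + ∑ j ∈ range (n + 1), C (a j) * derivative^[j] Q1 := by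
      rw [← Finset.sum_add_distrib]
      exact Finset.sum_congr rfl fun j _ => by rw [iter_deriv_add, mul_add]
    rw [hsplit, hQ1]
    ring

theorem stmt_18 (n : ℕ) (a : ℕ → ℂ)
    (ha : ∃ j, 1 ≤ j ∧ j ≤ n ∧ a j ≠ 0)
    (R : Polynomial ℂ) (hR : R ≠ 0) (hdeg : R.degree ≤ (n : ℕ)) :
    ∃ Q : Polynomial ℂ,
      ∑ j ∈ range (n + 1), C (a j) * Polynomial.derivative^[j] Q = R := by
  obtain ⟨j, hj1, hjn, hja⟩ := ha
  have hex : ∃ i, a i ≠ 0 := ⟨j, hja⟩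
  set k := Nat.find hex with hk
  have hak : a k ≠ 0 := Nat.find_spec hex
  have hkn : k ≤ n := le_trans (Nat.find_min' hex hja) hjn
  have hmin : ∀ i, i < k → a i = 0 := fun i hi => by
    by_contra h
    exact absurd hi (not_lt.mpr (Nat.find_min' hex h))
  exact aux18 n k a hkn hak hmin (R.natDegree + 1) R
    (lt_of_le_of_lt degree_le_natDegree (by exact_mod_cast Nat.lt_succ_self _))
end

section
/- Let a_0 ≠ 0 and a_1, …, a_n be real numbers, and let R be a real polynomial of degree d. If Q is a real polynomial satisfying a_0 Q + a_1 Q' + ⋯ + a_n Q^{(n)} = R, then deg Q = d. -/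
open Polynomial Finset

lemma iter_deriv_deg_lt_s19 (Q : Polynomial ℝ) (hQ : Q ≠ 0) (j : ℕ) (hj : 1 ≤ j) :
    (Polynomial.derivative^[j] Q).degree < Q.degree := by
  obtain ⟨k, rfl⟩ := Nat.exists_eq_add_of_le hj
  rw [Nat.add_comm, Function.iterate_add_apply]
  calc (Polynomial.derivative^[k] (Polynomial.derivative^[1] Q)).degree
      ≤ (Polynomial.derivative^[1] Q).degree := by
        induction k with
        | zero => simp
        | succ m ih =>
          rw [Function.iterate_succ_apply']
          exact le_trans (Polynomial.degree_derivative_le) (ih (Nat.le_add_right 1 m))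
    _ < Q.degree := by
        simpa using Polynomial.degree_derivative_lt hQ

theorem stmt_19 (n : ℕ) (a : ℕ → ℝ) (ha : a 0 ≠ 0)
    (R : Polynomial ℝ) (hR : R ≠ 0) (Q : Polynomial ℝ)
    (hQ : ∑ j ∈ range (n + 1), C (a j) * Polynomial.derivative^[j] Q = R) :
    Q.degree = R.degree := by
  have hQ0 : Q ≠ 0 := by
    rintro rfl
    apply hR
    rw [← hQ]
    simp
  rw [← hQ, Finset.sum_range_succ']
  simp only [Function.iterate_zero_apply]
  rw [Polynomial.degree_add_eq_right_of_degree_lt, Polynomial.degree_C_mul (by exact ha)]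
  rw [Polynomial.degree_C_mul (by exact ha)]
  apply lt_of_le_of_lt (Polynomial.degree_sum_le _ _)
  rw [Finset.sup_lt_iff]
  · intro i _
    apply lt_of_le_of_lt (Polynomial.degree_mul_le _ _)
    have h1 := iter_deriv_deg_lt_s19 Q hQ0 (i + 1) (Nat.le_add_left 1 i)
    calc (C (a (i+1))).degree + (Polynomial.derivative^[i+1] Q).degree
        ≤ 0 + (Polynomial.derivative^[i+1] Q).degree := by
          gcongr; exact Polynomial.degree_C_le
      _ = (Polynomial.derivative^[i+1] Q).degree := by rw [zero_add]
      _ < Q.degree := h1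
  · exact lt_of_lt_of_le (by simp) (Polynomial.zero_le_degree_iff.mpr hQ0)
end
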